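/- Let G be a finite simple graph and let u be a vertex of G. Then the sum, over all triangles T of G, of the quantity T_u(G) − T_u(G − T) equals Σ_{x ∈ N_u} Y_{u,x}(G)^2 − T_u(G) + (1/2) Σ_{x ∈ N_u} R_{x,u}(G). -/

import Mathlib

open Finset
open scoped Classical

variable {V : Type*} [Fintype V] [DecidableEq V]

/-- The neighborhood of `u` in `G`, as a finset. -/
noncomputable def nbr (G : SimpleGraph V) (u : V) : Finset V :=
  Finset.univ.filter fun x => G.Adj u x

/-- The co-degree `Y_{u,v}` of `u` and `v`. -/
noncomputable def codeg (G : SimpleGraph V) (u v : V) : ℕ :=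
  (nbr G u ∩ nbr G v).card

/-- The triple co-degree `Y_{u,v,w}`. -/
noncomputable def codeg3 (G : SimpleGraph V) (u v w : V) : ℕ :=
  (nbr G u ∩ nbr G v ∩ nbr G w).card

/-- The number of triangles `Q(G)`. -/
noncomputable def triCount (G : SimpleGraph V) : ℕ :=
  (G.cliqueFinset 3).card

/-- The graph `G − T` obtained by deleting the edges of a triangle `t = {a,b,c}`. -/
noncomputable def removeTri (G : SimpleGraph V) (t : Finset V) : SimpleGraph V :=
  G.deleteEdges ↑(t.sym2)

/-- `T_u(G)`: the number of edges of `G` with both endpoints in `N_u`. -/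
noncomputable def tEdges (G : SimpleGraph V) (u : V) : ℕ :=
  (G.edgeFinset.filter fun e => ∀ x ∈ e, x ∈ nbr G u).card

/-- `R_{u,v}`: the number of ordered pairs `(x,y)` with `xy ∈ E(G)`, `x ∈ N_{u,v}`,
`y ∈ N_u`, `y ≠ v`. -/
noncomputable def Rpairs (G : SimpleGraph V) (u v : V) : ℕ :=
  (((nbr G u ∩ nbr G v) ×ˢ ((nbr G u).erase v)).filter fun p => G.Adj p.1 p.2).card

/-- The co-degree as a function on unordered pairs. -/
noncomputable def codegE (G : SimpleGraph V) : Sym2 V → ℕ :=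
  Sym2.lift ⟨fun x y => codeg G x y, fun x y => by
    simp only [codeg, Finset.inter_comm]⟩

lemma mem_nbr {G : SimpleGraph V} {u x : V} : x ∈ nbr G u ↔ G.Adj u x := by
  simp [nbr]

noncomputable def nbrGraph (G : SimpleGraph V) (u : V) : SimpleGraph V where
  Adj x y := G.Adj x y ∧ x ∈ nbr G u ∧ y ∈ nbr G u
  symm := ⟨fun x y ⟨h, hx, hy⟩ => ⟨h.symm, hy, hx⟩⟩
  loopless := ⟨fun x ⟨h, _⟩ => G.loopless.irrefl x h⟩

noncomputable def pairsIn (G : SimpleGraph V) (u : V) : Finset (V × V) :=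
  ((nbr G u ×ˢ nbr G u)).filter fun p => G.Adj p.1 p.2

lemma two_mul_tEdges (G : SimpleGraph V) (u : V) :
    2 * tEdges G u = (pairsIn G u).card := by
  have h1 : (nbrGraph G u).edgeFinset = G.edgeFinset.filter fun e => ∀ x ∈ e, x ∈ nbr G u := by
    ext e
    induction e using Sym2.ind with
    | _ a b =>
      simp only [SimpleGraph.mem_edgeFinset, SimpleGraph.mem_edgeSet, mem_filter,
        Sym2.mem_iff]
      simp only [nbrGraph]
      constructor
      · rintro ⟨h, hx, hy⟩
        exact ⟨h, by rintro x (rfl | rfl) <;> assumption⟩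
      · rintro ⟨h, hall⟩
        exact ⟨h, hall a (by simp), hall b (by simp)⟩
  have h2 := SimpleGraph.two_mul_card_edgeFinset (G := nbrGraph G u)
  rw [h1] at h2
  rw [tEdges, h2]
  congr 1
  ext ⟨x, y⟩
  simp only [pairsIn, mem_filter, mem_product, mem_univ, true_and]
  simp only [nbrGraph]
  tauto

lemma removeTri_adj {G : SimpleGraph V} {t : Finset V} {x y : V} :
    (removeTri G t).Adj x y ↔ G.Adj x y ∧ ¬(x ∈ t ∧ y ∈ t) := by
  rw [removeTri, SimpleGraph.deleteEdges_adj]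
  simp [Finset.mk_mem_sym2_iff]

lemma pairsIn_removeTri_subset (G : SimpleGraph V) (u : V) (t : Finset V) :
    pairsIn (removeTri G t) u ⊆ pairsIn G u := by
  intro p
  simp only [pairsIn, mem_filter, mem_product, mem_nbr, removeTri_adj]
  tauto

lemma pairsIn_sdiff (G : SimpleGraph V) (u : V) (t : Finset V) :
    pairsIn G u \ pairsIn (removeTri G t) u =
      (pairsIn G u).filter fun p =>
        (p.1 ∈ t ∧ p.2 ∈ t) ∨ (u ∈ t ∧ (p.1 ∈ t ∨ p.2 ∈ t)) := by
  ext ⟨x, y⟩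
  simp only [mem_sdiff, mem_filter, pairsIn, mem_product, mem_nbr, removeTri_adj]
  tauto

lemma card_tris_two (G : SimpleGraph V) {a b : V} (hab : G.Adj a b) :
    ((G.cliqueFinset 3).filter fun t => a ∈ t ∧ b ∈ t).card = codeg G a b := by
  rw [codeg]
  symm
  refine Finset.card_bij (fun c _ => {a, b, c}) ?_ ?_ ?_
  · intro c hc
    simp only [mem_inter, mem_nbr] at hc
    simp only [mem_filter, SimpleGraph.mem_cliqueFinset_iff]
    refine ⟨SimpleGraph.is3Clique_triple_iff.2 ⟨hab, hc.1, hc.2⟩, by simp, by simp⟩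
  · intro c hc c' hc' h
    simp only [mem_inter, mem_nbr] at hc hc'
    have h' : ({a, b, c} : Finset V) = {a, b, c'} := h
    have : c ∈ ({a, b, c'} : Finset V) := h' ▸ (by simp : c ∈ ({a, b, c} : Finset V))
    simp only [mem_insert, mem_singleton] at this
    rcases this with rfl | rfl | rfl
    · exact absurd hc.1 (G.loopless.irrefl c)
    · exact absurd hc.2 (G.loopless.irrefl c)
    · rfl
  · intro t ht
    simp only [mem_filter, SimpleGraph.mem_cliqueFinset_iff] at ht
    obtain ⟨ht3, ha, hb⟩ := ht
    have hsub : ({a, b} : Finset V) ⊆ t := by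
      intro v hv; simp only [mem_insert, mem_singleton] at hv
      rcases hv with rfl | rfl <;> assumption
    have hcard2 : ({a, b} : Finset V).card = 2 := card_pair hab.ne
    have hone : (t \ {a, b}).card = 1 := by
      rw [card_sdiff_of_subset hsub, ht3.card_eq, hcard2]
    obtain ⟨w, hw⟩ := Finset.card_eq_one.1 hone
    have hwmem : w ∈ t ∧ w ∉ ({a, b} : Finset V) := by
      have : w ∈ t \ {a, b} := hw ▸ mem_singleton_self w
      exact ⟨(mem_sdiff.1 this).1, (mem_sdiff.1 this).2⟩
    have hwa : w ≠ a := fun h => hwmem.2 (by simp [h])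
    have hwb : w ≠ b := fun h => hwmem.2 (by simp [h])
    refine ⟨w, ?_, ?_⟩
    · simp only [mem_inter, mem_nbr]
      exact ⟨ht3.1 ha hwmem.1 (Ne.symm hwa), ht3.1 hb hwmem.1 (Ne.symm hwb)⟩
    · ext v
      simp only [mem_insert, mem_singleton]
      constructor
      · rintro (rfl | rfl | rfl)
        · exact ha
        · exact hb
        · exact hwmem.1
      · intro hv
        by_cases hva : v = a
        · exact Or.inl hva
        by_cases hvb : v = b
        · exact Or.inr (Or.inl hvb)
        · have : v ∈ t \ {a, b} := mem_sdiff.2 ⟨hv, by simp [hva, hvb]⟩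
          rw [hw, mem_singleton] at this
          exact Or.inr (Or.inr this)

lemma card_tris_excl (G : SimpleGraph V) {a b c : V} (hab : G.Adj a b) (hac : G.Adj a c)
    (hbc : G.Adj b c) :
    ((G.cliqueFinset 3).filter fun t => a ∈ t ∧ b ∈ t ∧ c ∉ t).card + 1 = codeg G a b := by
  have habc : ({a, b, c} : Finset V) ∈ (G.cliqueFinset 3).filter fun t => a ∈ t ∧ b ∈ t := by
    simp only [mem_filter, SimpleGraph.mem_cliqueFinset_iff]
    exact ⟨SimpleGraph.is3Clique_triple_iff.2 ⟨hab, hac, hbc⟩, by simp, by simp⟩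
  have heq : ((G.cliqueFinset 3).filter fun t => a ∈ t ∧ b ∈ t ∧ c ∉ t) =
      ((G.cliqueFinset 3).filter fun t => a ∈ t ∧ b ∈ t).erase {a, b, c} := by
    ext t
    simp only [mem_filter, mem_erase, SimpleGraph.mem_cliqueFinset_iff]
    constructor
    · rintro ⟨h3, ha, hb, hc⟩
      refine ⟨fun h => hc (h ▸ by simp), h3, ha, hb⟩
    · rintro ⟨hne, h3, ha, hb⟩
      refine ⟨h3, ha, hb, fun hc => hne ?_⟩
      have hsub : ({a, b, c} : Finset V) ⊆ t := by
        intro v hv; simp only [mem_insert, mem_singleton] at hv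
        rcases hv with rfl | rfl | rfl <;> assumption
      have h3card : ({a, b, c} : Finset V).card = 3 := by
        rw [card_insert_of_notMem (by simp [hab.ne, hac.ne]),
          card_pair hbc.ne]
      exact (Finset.eq_of_subset_of_card_le hsub (by rw [h3card, h3.card_eq])).symm
  rw [heq, card_erase_of_mem habc, ← card_tris_two G hab]
  have : 0 < ((G.cliqueFinset 3).filter fun t => a ∈ t ∧ b ∈ t).card :=
    card_pos.2 ⟨_, habc⟩
  omega

lemma tri_lost_count (G : SimpleGraph V) {u x y : V} (hux : G.Adj u x) (huy : G.Adj u y)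
    (hxy : G.Adj x y) :
    ((G.cliqueFinset 3).filter fun t => (x ∈ t ∧ y ∈ t) ∨ (u ∈ t ∧ (x ∈ t ∨ y ∈ t))).card + 2
      = codeg G x y + codeg G u x + codeg G u y := by
  have hsplit : ((G.cliqueFinset 3).filter fun t => (x ∈ t ∧ y ∈ t) ∨ (u ∈ t ∧ (x ∈ t ∨ y ∈ t)))
      = ((G.cliqueFinset 3).filter fun t => x ∈ t ∧ y ∈ t)
        ∪ ((G.cliqueFinset 3).filter fun t => u ∈ t ∧ x ∈ t ∧ y ∉ t)
        ∪ ((G.cliqueFinset 3).filter fun t => u ∈ t ∧ y ∈ t ∧ x ∉ t) := by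
    ext t
    simp only [mem_union, mem_filter]
    by_cases hxt : x ∈ t <;> by_cases hyt : y ∈ t <;> tauto
  have hd1 : Disjoint ((G.cliqueFinset 3).filter fun t => x ∈ t ∧ y ∈ t)
      ((G.cliqueFinset 3).filter fun t => u ∈ t ∧ x ∈ t ∧ y ∉ t) := by
    rw [Finset.disjoint_left]
    intro t h1 h2
    simp only [mem_filter] at h1 h2
    exact h2.2.2.2 h1.2.2
  have hd2 : Disjoint (((G.cliqueFinset 3).filter fun t => x ∈ t ∧ y ∈ t)
      ∪ ((G.cliqueFinset 3).filter fun t => u ∈ t ∧ x ∈ t ∧ y ∉ t))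
      ((G.cliqueFinset 3).filter fun t => u ∈ t ∧ y ∈ t ∧ x ∉ t) := by
    rw [Finset.disjoint_left]
    intro t h1 h2
    simp only [mem_union, mem_filter] at h1 h2
    rcases h1 with h1 | h1
    · exact h2.2.2.2 h1.2.1
    · exact h2.2.2.2 h1.2.2.1
  rw [hsplit, card_union_of_disjoint hd2, card_union_of_disjoint hd1,
    card_tris_two G hxy]
  have hb := card_tris_excl G hux huy hxy
  have hc := card_tris_excl G huy hux hxy.symm
  omega

lemma step_real (G : SimpleGraph V) (u : V) (t : Finset V) :
    (tEdges G u : ℝ) - tEdges (removeTri G t) u =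
      (1 / 2) * ((pairsIn G u).filter fun p =>
        (p.1 ∈ t ∧ p.2 ∈ t) ∨ (u ∈ t ∧ (p.1 ∈ t ∨ p.2 ∈ t))).card := by
  have h1 := two_mul_tEdges G u
  have h2 := two_mul_tEdges (removeTri G t) u
  have h3 : ((pairsIn G u).filter fun p =>
        (p.1 ∈ t ∧ p.2 ∈ t) ∨ (u ∈ t ∧ (p.1 ∈ t ∨ p.2 ∈ t))).card
      = (pairsIn G u).card - (pairsIn (removeTri G t) u).card := by
    rw [← pairsIn_sdiff, card_sdiff_of_subset (pairsIn_removeTri_subset G u t)]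
  have hle : (pairsIn (removeTri G t) u).card ≤ (pairsIn G u).card :=
    card_le_card (pairsIn_removeTri_subset G u t)
  have h4 : ((pairsIn G u).filter fun p =>
        (p.1 ∈ t ∧ p.2 ∈ t) ∨ (u ∈ t ∧ (p.1 ∈ t ∨ p.2 ∈ t))).card
        + 2 * tEdges (removeTri G t) u = 2 * tEdges G u := by
    rw [h3, h2, h1]
    omega
  have h5 := congrArg (Nat.cast : ℕ → ℝ) h4
  push_cast at h5
  linarith

lemma nbr_filter_adj (G : SimpleGraph V) (u x : V) :
    (nbr G u).filter (fun y => G.Adj x y) = nbr G u ∩ nbr G x := by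
  ext y; simp [mem_nbr]

lemma sum_fst (G : SimpleGraph V) (u : V) :
    ∑ p ∈ pairsIn G u, (codeg G u p.1 : ℝ) = ∑ x ∈ nbr G u, (codeg G u x : ℝ) ^ 2 := by
  rw [pairsIn, sum_filter, Finset.sum_product]
  refine sum_congr rfl fun x hx => ?_
  have hb : ∀ y : V, (if G.Adj (x, y).1 (x, y).2 then (codeg G u (x, y).1 : ℝ) else 0)
      = if G.Adj x y then (codeg G u x : ℝ) else 0 := fun y => rfl
  simp only [hb]
  rw [← sum_filter, nbr_filter_adj, sum_const, nsmul_eq_mul]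
  have : (nbr G u ∩ nbr G x).card = codeg G u x := rfl
  rw [this]
  ring

lemma sum_snd (G : SimpleGraph V) (u : V) :
    ∑ p ∈ pairsIn G u, (codeg G u p.2 : ℝ) = ∑ x ∈ nbr G u, (codeg G u x : ℝ) ^ 2 := by
  rw [← sum_fst G u]
  have hmem : ∀ p : V × V, p ∈ pairsIn G u → p.swap ∈ pairsIn G u := by
    rintro ⟨a, b⟩ h
    simp only [pairsIn, mem_filter, mem_product, Prod.swap] at h ⊢
    exact ⟨⟨h.1.2, h.1.1⟩, h.2.symm⟩
  refine Finset.sum_nbij' Prod.swap Prod.swap hmem hmem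
    (fun p _ => Prod.swap_swap p) (fun p _ => Prod.swap_swap p) (fun p _ => ?_)
  rw [Prod.fst_swap]

lemma Rpairs_real (G : SimpleGraph V) {u x : V} (hx : G.Adj u x) :
    (Rpairs G x u : ℝ) = ∑ y ∈ nbr G x ∩ nbr G u, ((codeg G x y : ℝ) - 1) := by
  have h1 : Rpairs G x u = ∑ y ∈ nbr G x ∩ nbr G u, ((nbr G x ∩ nbr G y).erase u).card := by
    rw [Rpairs, card_filter, Finset.sum_product]
    refine sum_congr rfl fun y hy => ?_
    rw [← card_filter]
    congr 1
    ext z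
    simp only [mem_filter, mem_erase, mem_inter, mem_nbr]
    tauto
  rw [h1]
  push_cast
  refine sum_congr rfl fun y hy => ?_
  simp only [mem_inter, mem_nbr] at hy
  have hu : u ∈ nbr G x ∩ nbr G y := by
    simp only [mem_inter, mem_nbr]
    exact ⟨hx.symm, hy.2.symm⟩
  rw [card_erase_of_mem hu]
  have hpos : 1 ≤ (nbr G x ∩ nbr G y).card := card_pos.2 ⟨u, hu⟩
  rw [Nat.cast_sub hpos]
  simp [codeg]

lemma sum_third (G : SimpleGraph V) (u : V) :
    ∑ p ∈ pairsIn G u, ((codeg G p.1 p.2 : ℝ) - 1) = ∑ x ∈ nbr G u, (Rpairs G x u : ℝ) := by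
  rw [pairsIn, sum_filter, Finset.sum_product]
  refine sum_congr rfl fun x hx => ?_
  rw [← sum_filter, nbr_filter_adj, Rpairs_real G (mem_nbr.1 hx)]
  rw [Finset.inter_comm]

lemma sum_ones (G : SimpleGraph V) (u : V) :
    ∑ _p ∈ pairsIn G u, (1 : ℝ) = 2 * tEdges G u := by
  rw [sum_const, nsmul_eq_mul, mul_one, ← two_mul_tEdges]
  push_cast
  ring

theorem tEdges_one_step_change (G : SimpleGraph V) (u : V) :
    (∑ t ∈ G.cliqueFinset 3, ((tEdges G u : ℝ) - tEdges (removeTri G t) u)) =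
      (∑ x ∈ nbr G u, (codeg G u x : ℝ) ^ 2) - tEdges G u
        + (1 / 2) * ∑ x ∈ nbr G u, (Rpairs G x u : ℝ) := by
  have hstep : (∑ t ∈ G.cliqueFinset 3, ((tEdges G u : ℝ) - tEdges (removeTri G t) u))
      = (1 / 2) * ∑ t ∈ G.cliqueFinset 3, ∑ p ∈ pairsIn G u,
          (if (p.1 ∈ t ∧ p.2 ∈ t) ∨ (u ∈ t ∧ (p.1 ∈ t ∨ p.2 ∈ t)) then (1 : ℝ) else 0) := by
    rw [mul_sum]
    refine sum_congr rfl fun t ht => ?_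
    rw [step_real G u t, sum_boole]
  rw [hstep, sum_comm]
  have hinner : ∀ p ∈ pairsIn G u,
      (∑ t ∈ G.cliqueFinset 3,
        if (p.1 ∈ t ∧ p.2 ∈ t) ∨ (u ∈ t ∧ (p.1 ∈ t ∨ p.2 ∈ t)) then (1 : ℝ) else 0)
      = (codeg G p.1 p.2 : ℝ) + (codeg G u p.1 : ℝ) + (codeg G u p.2 : ℝ) - 2 := by
    intro p hp
    simp only [pairsIn, mem_filter, mem_product, mem_nbr] at hp
    rw [sum_boole]
    have := tri_lost_count G hp.1.1 hp.1.2 hp.2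
    have hcast := congrArg (Nat.cast : ℕ → ℝ) this
    push_cast at hcast
    linarith
  rw [sum_congr rfl hinner]
  have hsplit : ∑ p ∈ pairsIn G u,
      ((codeg G p.1 p.2 : ℝ) + (codeg G u p.1 : ℝ) + (codeg G u p.2 : ℝ) - 2)
      = (∑ p ∈ pairsIn G u, ((codeg G p.1 p.2 : ℝ) - 1))
        + (∑ p ∈ pairsIn G u, (codeg G u p.1 : ℝ))
        + (∑ p ∈ pairsIn G u, (codeg G u p.2 : ℝ))
        - ∑ _p ∈ pairsIn G u, (1 : ℝ) := by
    rw [← sum_add_distrib, ← sum_add_distrib, ← sum_sub_distrib]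
    refine sum_congr rfl fun p _ => by ring
  rw [hsplit, sum_third, sum_fst, sum_snd, sum_ones]
  ring
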